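/- Fix K ≥ 1 and β₁, …, β_K ∈ ℝ, let ρ : ℝ → ℝ^K be differentiable, and for 0 ≤ k ≤ K define T_k(s) = ∏_{l=1}^k R_z(β_l)·R_x(ρ_l(s)) (so T₀(s) = I₃). Then for every k with 1 ≤ k ≤ K and every s ∈ ℝ: T_k′(s)·T_k(s)ᵀ − T_{k−1}′(s)·T_{k−1}(s)ᵀ = ρ_k′(s) · skew( T_{k−1}(s)·R_z(β_k)·e₁ ), where e₁ = (1, 0, 0)ᵀ and skew(v) denotes the 3×3 skew-symmetric matrix with skew(v)·w = v × w for all w ∈ ℝ³. (In origami terms: the difference of the angular velocities of consecutive panels, ω_k − ω_{k−1}, equals the folding-angle rate ρ̇_k times the direction vector of the common crease c_k.) -/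

import Mathlib

open Matrix Real

/-- The rotation matrix about the z-axis. -/
noncomputable def Rz (θ : ℝ) : Matrix (Fin 3) (Fin 3) ℝ :=
  !![Real.cos θ, -Real.sin θ, 0; Real.sin θ, Real.cos θ, 0; 0, 0, 1]

/-- The rotation matrix about the x-axis. -/
noncomputable def Rx (θ : ℝ) : Matrix (Fin 3) (Fin 3) ℝ :=
  !![1, 0, 0; 0, Real.cos θ, -Real.sin θ; 0, Real.sin θ, Real.cos θ]

/-- The skew-symmetric matrix of a vector `v`, satisfying `skew v *ᵥ w = v ×₃ w`. -/
noncomputable def skew (v : Fin 3 → ℝ) : Matrix (Fin 3) (Fin 3) ℝ :=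
  !![0, -v 2, v 1; v 2, 0, -v 0; -v 1, v 0, 0]

/-- The orientation of panel `P_k`:
`T_k(s) = ∏_{l=1}^k R_z(β_l)·R_x(ρ_l(s))` (with `T₀(s) = I₃`), angles indexed from 1. -/
noncomputable def Tpanel (β : ℕ → ℝ) (ρ : ℝ → ℕ → ℝ) (k : ℕ) (s : ℝ) :
    Matrix (Fin 3) (Fin 3) ℝ :=
  ((List.range k).map (fun l => Rz (β (l + 1)) * Rx (ρ s (l + 1)))).prod

/-- The entrywise `s`-derivative of `T_k(s)`. -/
noncomputable def Tpanel' (β : ℕ → ℝ) (ρ : ℝ → ℕ → ℝ) (k : ℕ) (s : ℝ) :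
    Matrix (Fin 3) (Fin 3) ℝ :=
  Matrix.of fun i j => deriv (fun u => Tpanel β ρ k u i j) s

/-! ### Auxiliary algebraic lemmas -/

lemma Rz_transpose (θ : ℝ) :
    (Rz θ)ᵀ = !![Real.cos θ, Real.sin θ, 0; -Real.sin θ, Real.cos θ, 0; 0, 0, 1] := by
  ext i j; fin_cases i <;> fin_cases j <;> simp [Rz, Matrix.vecHead, Matrix.vecTail]

lemma Rx_transpose (θ : ℝ) :
    (Rx θ)ᵀ = !![1, 0, 0; 0, Real.cos θ, Real.sin θ; 0, -Real.sin θ, Real.cos θ] := by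
  ext i j; fin_cases i <;> fin_cases j <;> simp [Rx, Matrix.vecHead, Matrix.vecTail]

lemma Rz_orth (θ : ℝ) : Rz θ * (Rz θ)ᵀ = 1 := by
  rw [Rz_transpose]
  ext i j
  fin_cases i <;> fin_cases j <;>
    simp [Rz, Matrix.mul_apply, Fin.sum_univ_three, Matrix.one_apply, Matrix.vecHead,
      Matrix.vecTail] <;>
    nlinarith [Real.sin_sq_add_cos_sq θ]

lemma Rx_orth (θ : ℝ) : Rx θ * (Rx θ)ᵀ = 1 := by
  rw [Rx_transpose]
  ext i j
  fin_cases i <;> fin_cases j <;>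
    simp [Rx, Matrix.mul_apply, Fin.sum_univ_three, Matrix.one_apply, Matrix.vecHead,
      Matrix.vecTail] <;>
    nlinarith [Real.sin_sq_add_cos_sq θ]

lemma Rz_det (θ : ℝ) : (Rz θ).det = 1 := by
  simp [Rz, Matrix.det_fin_three]
  nlinarith [Real.sin_sq_add_cos_sq θ]

lemma Rx_det (θ : ℝ) : (Rx θ).det = 1 := by
  simp [Rx, Matrix.det_fin_three]
  nlinarith [Real.sin_sq_add_cos_sq θ]

lemma skew_conj_aux (Q : Matrix (Fin 3) (Fin 3) ℝ) (v : Fin 3 → ℝ) :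
    Qᵀ * skew (Q *ᵥ v) * Q = Q.det • skew v := by
  ext i j
  fin_cases i <;> fin_cases j <;>
    simp [skew, Matrix.mul_apply, Matrix.transpose_apply, Matrix.mulVec, dotProduct,
      Fin.sum_univ_three, Matrix.det_fin_three] <;> ring

lemma skew_conj {Q : Matrix (Fin 3) (Fin 3) ℝ} (hQ : Q * Qᵀ = 1) (hdet : Q.det = 1)
    (v : Fin 3 → ℝ) : Q * skew v * Qᵀ = skew (Q *ᵥ v) := by
  have h := skew_conj_aux Q v
  rw [hdet, one_smul] at h
  calc Q * skew v * Qᵀ = Q * (Qᵀ * skew (Q *ᵥ v) * Q) * Qᵀ := by rw [h]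
    _ = (Q * Qᵀ) * skew (Q *ᵥ v) * (Q * Qᵀ) := by noncomm_ring
    _ = skew (Q *ᵥ v) := by rw [hQ]; simp

lemma mul_cancel_left {M N W : Matrix (Fin 3) (Fin 3) ℝ} (h : M * N = 1) :
    M * (N * W) = W := by rw [← mul_assoc, h, one_mul]

/-! ### Properties of `Tpanel` -/

lemma Tpanel_succ (β : ℕ → ℝ) (ρ : ℝ → ℕ → ℝ) (k : ℕ) (u : ℝ) :
    Tpanel β ρ (k + 1) u = Tpanel β ρ k u * (Rz (β (k + 1)) * Rx (ρ u (k + 1))) := by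
  simp [Tpanel, List.range_succ]

lemma Tpanel_orth (β : ℕ → ℝ) (ρ : ℝ → ℕ → ℝ) (k : ℕ) (s : ℝ) :
    Tpanel β ρ k s * (Tpanel β ρ k s)ᵀ = 1 := by
  induction k with
  | zero => simp [Tpanel]
  | succ k ih =>
    rw [Tpanel_succ]
    simp only [Matrix.transpose_mul]
    calc Tpanel β ρ k s * (Rz (β (k + 1)) * Rx (ρ s (k + 1))) *
          ((Rx (ρ s (k + 1)))ᵀ * (Rz (β (k + 1)))ᵀ * (Tpanel β ρ k s)ᵀ)
        = Tpanel β ρ k s * (Rz (β (k + 1)) * ((Rx (ρ s (k + 1)) * (Rx (ρ s (k + 1)))ᵀ) *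
            ((Rz (β (k + 1)))ᵀ * (Tpanel β ρ k s)ᵀ))) := by noncomm_ring
      _ = Tpanel β ρ k s * (Tpanel β ρ k s)ᵀ := by
            rw [Rx_orth, one_mul, mul_cancel_left (Rz_orth _)]
      _ = 1 := ih

lemma Tpanel_det (β : ℕ → ℝ) (ρ : ℝ → ℕ → ℝ) (k : ℕ) (s : ℝ) :
    (Tpanel β ρ k s).det = 1 := by
  induction k with
  | zero => simp [Tpanel]
  | succ k ih =>
    rw [Tpanel_succ, Matrix.det_mul, Matrix.det_mul, ih, Rz_det, Rx_det]
    ring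

/-! ### Entrywise derivatives of matrix-valued functions -/

/-- Entrywise `HasDerivAt` for matrix-valued functions. -/
def HDM (f : ℝ → Matrix (Fin 3) (Fin 3) ℝ) (f' : Matrix (Fin 3) (Fin 3) ℝ) (s : ℝ) : Prop :=
  ∀ i j, HasDerivAt (fun u => f u i j) (f' i j) s

lemma HDM.const (C : Matrix (Fin 3) (Fin 3) ℝ) (s : ℝ) : HDM (fun _ => C) 0 s := by
  intro i j
  simpa using hasDerivAt_const s (C i j)

lemma HDM.mul {f g : ℝ → Matrix (Fin 3) (Fin 3) ℝ} {f' g' : Matrix (Fin 3) (Fin 3) ℝ} {s : ℝ}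
    (hf : HDM f f' s) (hg : HDM g g' s) :
    HDM (fun u => f u * g u) (f' * g s + f s * g') s := by
  intro i j
  have h : ∀ u, (f u * g u) i j = ∑ l : Fin 3, f u i l * g u l j := fun u => Matrix.mul_apply
  have key : HasDerivAt (fun u => ∑ l : Fin 3, f u i l * g u l j)
      (∑ l : Fin 3, (f' i l * g s l j + f s i l * g' l j)) s :=
    HasDerivAt.fun_sum fun l _ => (hf i l).mul (hg l j)
  simp only [h]
  convert key using 1
  simp [Matrix.add_apply, Matrix.mul_apply, Finset.sum_add_distrib]

lemma HDM.unique {f : ℝ → Matrix (Fin 3) (Fin 3) ℝ} {f' g' : Matrix (Fin 3) (Fin 3) ℝ} {s : ℝ}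
    (hf : HDM f f' s) (hg : HDM f g' s) : f' = g' := by
  ext i j; exact (hf i j).unique (hg i j)

lemma hdm_Rx (ρ : ℝ → ℕ → ℝ) (hρ : ∀ l, Differentiable ℝ (fun s => ρ s l)) (l : ℕ) (s : ℝ) :
    HDM (fun u => Rx (ρ u l)) (deriv (fun u => ρ u l) s • (skew ![1,0,0] * Rx (ρ s l))) s := by
  have hd : HasDerivAt (fun u => ρ u l) (deriv (fun u => ρ u l) s) s :=
    ((hρ l) s).hasDerivAt
  have hE : skew ![1,0,0] * Rx (ρ s l) =
      !![0, 0, 0; 0, -Real.sin (ρ s l), -Real.cos (ρ s l);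
         0, Real.cos (ρ s l), -Real.sin (ρ s l)] := by
    ext i j
    fin_cases i <;> fin_cases j <;>
      simp [skew, Rx, Matrix.mul_apply, Fin.sum_univ_three, Matrix.vecHead, Matrix.vecTail]
  rw [hE]
  intro i j
  fin_cases i <;> fin_cases j <;>
    simp [Rx, Matrix.smul_apply, Matrix.vecHead, Matrix.vecTail]
  · exact hasDerivAt_const s 1
  · exact hasDerivAt_const s 0
  · exact hasDerivAt_const s 0
  · exact hasDerivAt_const s 0
  · simpa [mul_comm] using hd.cos
  · simpa [mul_comm] using hd.sin.fun_neg
  · exact hasDerivAt_const s 0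
  · simpa [mul_comm] using hd.sin
  · simpa [mul_comm] using hd.cos

lemma hdm_step (β : ℕ → ℝ) (ρ : ℝ → ℕ → ℝ) (hρ : ∀ l, Differentiable ℝ (fun s => ρ s l))
    (l : ℕ) (s : ℝ) :
    HDM (fun u => Rz (β l) * Rx (ρ u l))
      (Rz (β l) * (deriv (fun u => ρ u l) s • (skew ![1,0,0] * Rx (ρ s l)))) s := by
  have h := (HDM.const (Rz (β l)) s).mul (hdm_Rx ρ hρ l s)
  simpa using h

lemma hdm_Tpanel (β : ℕ → ℝ) (ρ : ℝ → ℕ → ℝ) (hρ : ∀ l, Differentiable ℝ (fun s => ρ s l))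
    (k : ℕ) (s : ℝ) : HDM (fun u => Tpanel β ρ k u) (Tpanel' β ρ k s) s := by
  suffices h : ∃ D, HDM (fun u => Tpanel β ρ k u) D s by
    obtain ⟨D, hD⟩ := h
    have heq : Tpanel' β ρ k s = D := by
      ext i j; simpa [Tpanel'] using (hD i j).deriv
    rw [heq]; exact hD
  induction k with
  | zero => exact ⟨0, by simpa [Tpanel] using HDM.const 1 s⟩
  | succ k ih =>
    obtain ⟨D, hD⟩ := ih
    refine ⟨D * (Rz (β (k + 1)) * Rx (ρ s (k + 1))) +
      Tpanel β ρ k s * (Rz (β (k + 1)) * (deriv (fun u => ρ u (k + 1)) s •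
        (skew ![1,0,0] * Rx (ρ s (k + 1))))), ?_⟩
    have h := hD.mul (hdm_step β ρ hρ (k + 1) s)
    simpa only [← Tpanel_succ] using h

lemma Tpanel'_succ (β : ℕ → ℝ) (ρ : ℝ → ℕ → ℝ) (hρ : ∀ l, Differentiable ℝ (fun s => ρ s l))
    (k : ℕ) (s : ℝ) :
    Tpanel' β ρ (k + 1) s =
      Tpanel' β ρ k s * (Rz (β (k + 1)) * Rx (ρ s (k + 1))) +
        Tpanel β ρ k s *
          (Rz (β (k + 1)) * (deriv (fun u => ρ u (k + 1)) s •
            (skew ![1,0,0] * Rx (ρ s (k + 1))))) := by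
  have h1 := hdm_Tpanel β ρ hρ (k + 1) s
  have h2 := (hdm_Tpanel β ρ hρ k s).mul (hdm_step β ρ hρ (k + 1) s)
  simp only [← Tpanel_succ] at h2
  exact h1.unique h2

/-- for a differentiable path of folding angles,
`T_k′·T_kᵀ − T_{k−1}′·T_{k−1}ᵀ = ρ_k′ · skew(T_{k−1}·R_z(β_k)·e₁)`, i.e. the difference of
angular velocities of consecutive panels is the folding-angle rate times the direction
vector of the common crease. -/
theorem angular_velocity_difference (K : ℕ) (hK : 1 ≤ K) (β : ℕ → ℝ) (ρ : ℝ → ℕ → ℝ)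
    (hρ : ∀ l, Differentiable ℝ (fun s => ρ s l))
    (k : ℕ) (hk1 : 1 ≤ k) (hkK : k ≤ K) (s : ℝ) :
    Tpanel' β ρ k s * (Tpanel β ρ k s)ᵀ - Tpanel' β ρ (k - 1) s * (Tpanel β ρ (k - 1) s)ᵀ =
      deriv (fun u => ρ u k) s •
        skew ((Tpanel β ρ (k - 1) s * Rz (β k)).mulVec ![1, 0, 0]) := by
  obtain ⟨m, rfl⟩ : ∃ m, k = m + 1 := ⟨k - 1, (Nat.succ_pred_eq_of_pos hk1).symm⟩
  simp only [Nat.add_sub_cancel]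
  set A := Tpanel β ρ m s with hA
  set A' := Tpanel' β ρ m s with hA'
  set Z := Rz (β (m + 1)) with hZ
  set X := Rx (ρ s (m + 1)) with hX
  set c := deriv (fun u => ρ u (m + 1)) s with hc
  set E := skew ![(1:ℝ), 0, 0] with hE
  have hZ1 : Z * Zᵀ = 1 := Rz_orth _
  have hX1 : X * Xᵀ = 1 := Rx_orth _
  have hA1 : A * Aᵀ = 1 := Tpanel_orth β ρ m s
  have hAZ : (A * Z) * (A * Z)ᵀ = 1 := by
    rw [Matrix.transpose_mul]
    calc A * Z * (Zᵀ * Aᵀ) = A * ((Z * Zᵀ) * Aᵀ) := by noncomm_ring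
      _ = 1 := by rw [hZ1, one_mul, hA1]
  have hdetAZ : (A * Z).det = 1 := by
    rw [Matrix.det_mul, Tpanel_det, Rz_det, one_mul]
  have hskew : (A * Z) * E * (A * Z)ᵀ = skew ((A * Z) *ᵥ ![1, 0, 0]) :=
    skew_conj hAZ hdetAZ _
  rw [Tpanel'_succ β ρ hρ m s, Tpanel_succ β ρ m s, ← hskew]
  simp only [← hA, ← hA', ← hZ, ← hX, ← hc, ← hE]
  simp only [Matrix.transpose_mul, add_mul, mul_smul_comm, smul_mul_assoc, mul_assoc]
  rw [mul_cancel_left hX1, mul_cancel_left hZ1]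
  abel
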